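/- Let g be a homomorphism from the multiplicative group of positive rationals to the unit circle. If g((3n+1)/(5n+2)) = 1 for all positive integers n, and g(p) = 1 for every prime p not dividing 30, then g(2) = g(3) = g(5) = 1, i.e. g is identically 1. -/

import Mathlib

/-- If a homomorphism `g` from the positive rationals to the unit circle satisfies
`g((3n+1)/(5n+2)) = 1` for all `n ≥ 1` and `g(p) = 1` for every prime `p ∤ 30`, then
`g(2) = g(3) = g(5) = 1`, i.e. `g` is identically `1` on the positive rationals. -/
theorem stmt_16 (g : ℚ → ℂ)
    (hgmul : ∀ r s : ℚ, 0 < r → 0 < s → g (r * s) = g r * g s)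
    (hgnorm : ∀ r : ℚ, 0 < r → ‖g r‖ = 1)
    (hrat : ∀ n : ℕ, 0 < n → g ((3 * n + 1) / (5 * n + 2)) = 1)
    (hp : ∀ p : ℕ, p.Prime → ¬ p ∣ 30 → g p = 1) :
    g 2 = 1 ∧ g 3 = 1 ∧ g 5 = 1 ∧ ∀ r : ℚ, 0 < r → g r = 1 := by
  -- primes 7, 11, 13, 17
  have hp7 : g (7 : ℚ) = 1 := by have := hp 7 (by norm_num) (by norm_num); exact_mod_cast this
  have hp11 : g (11 : ℚ) = 1 := by have := hp 11 (by norm_num) (by norm_num); exact_mod_cast this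
  have hp13 : g (13 : ℚ) = 1 := by have := hp 13 (by norm_num) (by norm_num); exact_mod_cast this
  have hp17 : g (17 : ℚ) = 1 := by have := hp 17 (by norm_num) (by norm_num); exact_mod_cast this
  -- values from hrat
  have h4 : g ((13 : ℚ)/22) = 1 := by
    have := hrat 4 (by norm_num); norm_num at this; exact this
  have h2 : g ((7 : ℚ)/12) = 1 := by
    have := hrat 2 (by norm_num); norm_num at this; exact this
  have h3 : g ((10 : ℚ)/17) = 1 := by
    have := hrat 3 (by norm_num); norm_num at this; exact this
  -- g 2 = 1
  have e13 : g (13 : ℚ) = g ((13:ℚ)/22) * g 22 := by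
    have := hgmul (13/22) 22 (by norm_num) (by norm_num); norm_num at this; exact this
  have e22 : g (22 : ℚ) = g 2 * g 11 := by
    have := hgmul 2 11 (by norm_num) (by norm_num); norm_num at this; exact this
  have hg2 : g (2 : ℚ) = 1 := by
    rw [e22, h4, hp11, one_mul, mul_one] at e13
    rw [← e13, hp13]
  -- g 3 = 1
  have e7 : g (7 : ℚ) = g ((7:ℚ)/12) * g 12 := by
    have := hgmul (7/12) 12 (by norm_num) (by norm_num); norm_num at this; exact this
  have e12 : g (12 : ℚ) = g 2 * (g 2 * g 3) := by
    have ha := hgmul 2 6 (by norm_num) (by norm_num)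
    have hb := hgmul 2 3 (by norm_num) (by norm_num)
    norm_num at ha hb; rw [ha, hb]
  have hg3 : g (3 : ℚ) = 1 := by
    rw [e12, hg2, h2, hp7] at e7
    simpa using e7.symm
  -- g 5 = 1
  have e10 : g (10 : ℚ) = g 2 * g 5 := by
    have := hgmul 2 5 (by norm_num) (by norm_num); norm_num at this; exact this
  have hg5 : g (5 : ℚ) = 1 := by
    have := hgmul (10/17) 17 (by norm_num) (by norm_num)
    norm_num at this
    rw [h3, one_mul] at this
    rw [e10, hg2, one_mul] at this
    rw [this, hp17]
  -- g 1 = 1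
  have hg1 : g (1 : ℚ) = 1 := by
    have h := hgmul 1 1 one_pos one_pos
    have hne : g (1:ℚ) ≠ 0 := by
      intro h0
      have := hgnorm 1 one_pos
      rw [h0] at this; simp at this
    rw [mul_one] at h
    have : g (1:ℚ) * 1 = g 1 * g 1 := by rw [mul_one]; exact h
    exact (mul_left_cancel₀ hne this).symm
  -- all primes
  have gprime : ∀ p : ℕ, p.Prime → g p = 1 := by
    intro p hpp
    by_cases hdvd : p ∣ 30
    · have hle : p ≤ 30 := Nat.le_of_dvd (by norm_num) hdvd
      interval_cases p <;> first
        | (exfalso; revert hpp hdvd; decide)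
        | (push_cast; assumption)
    · exact hp p hpp hdvd
  -- all positive naturals
  have gnat : ∀ n : ℕ, 0 < n → g n = 1 := by
    intro n
    induction n using Nat.strong_induction_on with
    | _ n ih =>
      intro hn
      rcases eq_or_lt_of_le (show 1 ≤ n from hn) with h1 | h1
      · rw [← h1]; exact_mod_cast hg1
      · have hne1 : n ≠ 1 := by omega
        have hpf := Nat.minFac_prime hne1
        obtain ⟨m, hm⟩ := Nat.minFac_dvd n
        have hm0 : m ≠ 0 := by rintro rfl; simp at hm; omega
        have h2le := hpf.two_le
        have hmlt : m < n := by nlinarith [Nat.pos_of_ne_zero hm0]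
        have hcast : (n : ℚ) = (n.minFac : ℚ) * (m : ℚ) := by
          rw [show (n:ℚ) = ((n.minFac * m : ℕ):ℚ) from by rw [← hm]]; push_cast; ring
        have hmul := hgmul (n.minFac : ℚ) (m : ℚ)
          (by exact_mod_cast hpf.pos) (by exact_mod_cast Nat.pos_of_ne_zero hm0)
        rw [hcast, hmul, gprime _ hpf, ih m hmlt (Nat.pos_of_ne_zero hm0), one_mul]
  refine ⟨hg2, hg3, hg5, ?_⟩
  intro r hr
  have hnum : 0 < r.num := Rat.num_pos.mpr hr
  have hden : (0:ℚ) < (r.den : ℚ) := by exact_mod_cast r.pos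
  have e : (r.num : ℚ) / r.den = r := Rat.num_div_den r
  have h1 := hgmul ((r.num : ℚ)/r.den) (r.den) (by rw [e]; exact hr) hden
  rw [div_mul_cancel₀ _ (ne_of_gt hden), e] at h1
  have hnumnat : (r.num : ℚ) = (r.num.toNat : ℚ) := by
    exact_mod_cast (Int.toNat_of_nonneg hnum.le).symm
  have hg_num : g (r.num : ℚ) = 1 := by
    rw [hnumnat]; exact gnat _ (by omega)
  have hg_den : g (r.den : ℚ) = 1 := gnat _ r.pos
  rw [hg_num, hg_den, mul_one] at h1
  exact h1.symm
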